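/- C^{p+n,q+n} ≅ M_{2^n}(C^{p,q}): for all natural numbers p, q, n, the real Clifford algebra of the quadratic form Q_{p+n,q+n} on Fin (p+n+q+n) → ℝ is isomorphic as an ℝ-algebra to the algebra of 2^n × 2^n matrices with entries in the real Clifford algebra of Q_{p,q}. -/

import Mathlib

/-- The quadratic form `Q_{p,q}` on `Fin (p + q) → ℝ`, given by
`Q_{p,q}(x) = -(x₀² + ⋯ + x_{p-1}²) + (x_p² + ⋯ + x_{p+q-1}²)`. -/
noncomputable def Qpq (p q : ℕ) : QuadraticForm ℝ (Fin (p + q) → ℝ) :=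
  QuadraticMap.weightedSumSquares ℝ (fun i : Fin (p + q) => if (i : ℕ) < p then (-1 : ℝ) else 1)

noncomputable section
open CliffordAlgebra

namespace CliffAux

attribute [-simp] Fin.castSucc_succ

/-- weighted sum of squares form -/
abbrev Qw {n : ℕ} (w : Fin n → ℝ) : QuadraticForm ℝ (Fin n → ℝ) :=
  QuadraticMap.weightedSumSquares ℝ w

variable {k : ℕ}

/-- extended weights: a new -1 at position 0 and a new +1 at the last position -/
def wex (w : Fin k → ℝ) : Fin (k + 1 + 1) → ℝ :=
  Fin.snoc (Fin.cons (-1) w) 1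

@[simp] lemma wex_zero (w : Fin k → ℝ) : wex w 0 = -1 := by
  rw [wex, show (0 : Fin (k+1+1)) = Fin.castSucc 0 by simp, Fin.snoc_castSucc, Fin.cons_zero]

@[simp] lemma wex_last (w : Fin k → ℝ) : wex w (Fin.last (k+1)) = 1 := by
  rw [wex, Fin.snoc_last]

@[simp] lemma wex_mid (w : Fin k → ℝ) (j : Fin k) :
    wex w (j.succ.castSucc) = w j := by
  rw [wex, Fin.snoc_castSucc, Fin.cons_succ]

lemma Qw_ex_apply (w : Fin k → ℝ) (v : Fin (k+1+1) → ℝ) :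
    Qw (wex w) v = Qw w (fun j => v (j.succ.castSucc))
      + v (Fin.last (k+1)) * v (Fin.last (k+1)) - v 0 * v 0 := by
  rw [QuadraticMap.weightedSumSquares_apply, QuadraticMap.weightedSumSquares_apply,
    Fin.sum_univ_castSucc, Fin.sum_univ_succ]
  simp only [Fin.castSucc_zero, wex_zero, wex_mid, wex_last]
  simp only [smul_eq_mul]
  ring

lemma Qw_single (w : Fin k → ℝ) (i : Fin k) (c : ℝ) :
    Qw w (Pi.single i c) = w i * (c * c) := by
  rw [QuadraticMap.weightedSumSquares_apply]
  rw [Finset.sum_eq_single i]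
  · simp
  · intro b _ hb; simp [Pi.single_apply, hb]
  · simp

/-- anticommutation of generators with pointwise-orthogonal supports -/
lemma ι_anticomm {n : ℕ} {w : Fin n → ℝ} {a b : Fin n → ℝ}
    (h : ∀ t, a t * b t = 0) :
    ι (Qw w) a * ι (Qw w) b = - (ι (Qw w) b * ι (Qw w) a) := by
  have hp : QuadraticMap.polar (Qw w) a b = 0 := by
    unfold QuadraticMap.polar
    rw [QuadraticMap.weightedSumSquares_apply, QuadraticMap.weightedSumSquares_apply,
      QuadraticMap.weightedSumSquares_apply]
    rw [← Finset.sum_sub_distrib, ← Finset.sum_sub_distrib]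
    apply Finset.sum_eq_zero
    intro t _
    have h0 := h t
    simp only [Pi.add_apply, smul_eq_mul]
    linear_combination (2 * w t) * h0
  have := CliffordAlgebra.ι_mul_ι_add_swap (Q := Qw w) a b
  rw [hp, map_zero] at this
  rw [eq_neg_iff_add_eq_zero]
  exact this


/-- inclusion of the middle coordinates -/
def incl (m : Fin k → ℝ) : Fin (k + 1 + 1) → ℝ :=
  Fin.snoc (Fin.cons 0 m) 0

@[simp] lemma incl_zero (m : Fin k → ℝ) : incl m 0 = 0 := by
  rw [incl, show (0 : Fin (k+1+1)) = Fin.castSucc 0 by simp, Fin.snoc_castSucc, Fin.cons_zero]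

@[simp] lemma incl_last (m : Fin k → ℝ) : incl m (Fin.last (k+1)) = 0 := by
  rw [incl, Fin.snoc_last]

@[simp] lemma incl_mid (m : Fin k → ℝ) (j : Fin k) : incl m (j.succ.castSucc) = m j := by
  rw [incl, Fin.snoc_castSucc, Fin.cons_succ]

lemma incl_add (m m' : Fin k → ℝ) : incl (m + m') = incl m + incl m' := by
  funext t
  refine Fin.lastCases ?_ (fun u => ?_) t
  · simp
  · refine Fin.cases ?_ (fun v => ?_) u
    · simpa using (incl_zero (m + m')).trans (by simp)
    · simp

lemma incl_smul (c : ℝ) (m : Fin k → ℝ) : incl (c • m) = c • incl m := by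
  funext t
  refine Fin.lastCases ?_ (fun u => ?_) t
  · simp
  · refine Fin.cases ?_ (fun v => ?_) u
    · simpa using (incl_zero (c • m)).trans (by simp)
    · simp

lemma incl_single (j : Fin k) : incl (Pi.single j (1:ℝ)) = Pi.single (j.succ.castSucc) (1:ℝ) := by
  funext t
  refine Fin.lastCases ?_ (fun u => ?_) t
  · rw [incl_last, Pi.single_apply, if_neg]
    intro hc
    exact absurd (congrArg Fin.val hc).symm (by simp [Fin.val_last]; omega)
  · refine Fin.cases ?_ (fun v => ?_) u
    · rw [Fin.castSucc_zero, incl_zero, Pi.single_apply, if_neg]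
      intro hc
      exact absurd (congrArg Fin.val hc).symm (by simp)
    · rw [incl_mid, Pi.single_apply, Pi.single_apply]
      congr 1
      simp [Fin.castSucc_inj, Fin.succ_inj, eq_comm]

lemma Qw_incl (w : Fin k → ℝ) (m : Fin k → ℝ) : Qw (wex w) (incl m) = Qw w m := by
  rw [Qw_ex_apply]
  simp


variable (w : Fin k → ℝ)

/-- the candidate images of the generators, as a linear map into 2x2 matrices -/
def phiLin : (Fin (k+1+1) → ℝ) →ₗ[ℝ] Matrix (Fin 2) (Fin 2) (CliffordAlgebra (Qw w)) where
  toFun v :=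
    !![ι (Qw w) (fun j => v (j.succ.castSucc)),
       algebraMap ℝ _ (v (Fin.last (k+1)) + v 0);
       algebraMap ℝ _ (v (Fin.last (k+1)) - v 0),
       - ι (Qw w) (fun j => v (j.succ.castSucc))]
  map_add' v u := by
    have h : (fun j : Fin k => v (j.succ.castSucc) + u (j.succ.castSucc))
        = (fun j => v (j.succ.castSucc)) + (fun j => u (j.succ.castSucc)) := rfl
    ext i j
    fin_cases i <;> fin_cases j <;>
      simp [h, Pi.add_apply, map_add, neg_add] <;> abel
  map_smul' c v := by
    have h : ι (Qw w) (fun j => (c • v) (j.succ.castSucc))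
        = c • ι (Qw w) (fun j => v (j.succ.castSucc)) :=
      map_smul (ι (Qw w)) c (fun j => v (j.succ.castSucc))
    ext i j
    fin_cases i <;> fin_cases j <;>
      simp only [Fin.zero_eta, Fin.mk_one, Matrix.of_apply, Matrix.cons_val', Matrix.cons_val_zero,
        Matrix.cons_val_one, Matrix.head_cons, Matrix.head_fin_const, Matrix.empty_val',
        Matrix.cons_val_fin_one, Matrix.smul_apply, RingHom.id_apply]
    · exact h
    · rw [show (c • v) (Fin.last (k+1)) = c * v (Fin.last (k+1)) from rfl,
        show (c • v) 0 = c * v 0 from rfl, ← mul_add, map_mul, ← Algebra.smul_def]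
    · rw [show (c • v) (Fin.last (k+1)) = c * v (Fin.last (k+1)) from rfl,
        show (c • v) 0 = c * v 0 from rfl, ← mul_sub, map_mul, ← Algebra.smul_def]
    · rw [h, smul_neg]

lemma phiLin_sq (v : Fin (k+1+1) → ℝ) :
    phiLin w v * phiLin w v = algebraMap ℝ _ (Qw (wex w) v) := by
  have hQ1 : Qw (wex w) v = Qw w (fun j => v (j.succ.castSucc))
      + (v (Fin.last (k+1)) + v 0) * (v (Fin.last (k+1)) - v 0) := by
    rw [Qw_ex_apply]; ring
  have hQ2 : Qw (wex w) v = Qw w (fun j => v (j.succ.castSucc))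
      + (v (Fin.last (k+1)) - v 0) * (v (Fin.last (k+1)) + v 0) := by
    rw [Qw_ex_apply]; ring
  rw [phiLin]
  dsimp only [LinearMap.coe_mk, AddHom.coe_mk]
  rw [Matrix.mul_fin_two, Matrix.algebraMap_eq_diagonal]
  ext i j
  fin_cases i <;> fin_cases j <;>
    simp only [Fin.zero_eta, Fin.mk_one, Matrix.of_apply, Matrix.cons_val', Matrix.cons_val_zero,
      Matrix.cons_val_one, Matrix.head_cons, Matrix.head_fin_const, Matrix.empty_val',
      Matrix.cons_val_fin_one, Matrix.diagonal_apply_eq, Pi.algebraMap_apply,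
      Matrix.diagonal_apply_ne _ (by decide : (0 : Fin 2) ≠ 1),
      Matrix.diagonal_apply_ne _ (by decide : (1 : Fin 2) ≠ 0)]
  · rw [CliffordAlgebra.ι_sq_scalar, ← map_mul, ← map_add, hQ1]
  · rw [mul_neg, Algebra.commutes, add_neg_cancel]
  · rw [neg_mul, Algebra.commutes, add_neg_cancel]
  · rw [neg_mul_neg, CliffordAlgebra.ι_sq_scalar, ← map_mul, ← map_add, hQ2, add_comm]

/-- The algebra map `C(Q') → M_2(C(Q))`. -/
def PhiHom : CliffordAlgebra (Qw (wex w)) →ₐ[ℝ] Matrix (Fin 2) (Fin 2) (CliffordAlgebra (Qw w)) :=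
  CliffordAlgebra.lift _ ⟨phiLin w, phiLin_sq w⟩

lemma PhiHom_ι (v : Fin (k+1+1) → ℝ) : PhiHom w (ι _ v) = phiLin w v := by
  rw [PhiHom, CliffordAlgebra.lift_ι_apply]


lemma single_mul_single_zero {n : ℕ} {i j : Fin n} (h : i ≠ j) (t : Fin n) :
    Pi.single (M := fun _ => ℝ) i 1 t * Pi.single (M := fun _ => ℝ) j 1 t = 0 := by
  rcases eq_or_ne t i with rfl|ht
  · rw [Pi.single_eq_of_ne h, mul_zero]
  · rw [Pi.single_eq_of_ne ht, zero_mul]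

/-- the extra negative generator -/
def fE : CliffordAlgebra (Qw (wex w)) := ι _ (Pi.single 0 1)

/-- the extra positive generator -/
def gE : CliffordAlgebra (Qw (wex w)) := ι _ (Pi.single (Fin.last (k+1)) 1)

lemma last_ne_zero : (Fin.last (k+1)) ≠ (0 : Fin (k+1+1)) := by
  simp [Fin.ext_iff]

lemma hff : fE w * fE w = -1 := by
  rw [fE, CliffordAlgebra.ι_sq_scalar, Qw_single]
  simp

lemma hgg : gE w * gE w = 1 := by
  rw [gE, CliffordAlgebra.ι_sq_scalar, Qw_single]
  simp

lemma hgf : gE w * fE w = -(fE w * gE w) := by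
  rw [gE, fE]
  exact ι_anticomm (fun t => single_mul_single_zero (last_ne_zero) t)

lemma ff' (t : CliffordAlgebra (Qw (wex w))) : fE w * (fE w * t) = -t := by
  rw [← mul_assoc, hff, neg_one_mul]

lemma gg' (t : CliffordAlgebra (Qw (wex w))) : gE w * (gE w * t) = t := by
  rw [← mul_assoc, hgg, one_mul]

lemma gf' (t : CliffordAlgebra (Qw (wex w))) : gE w * (fE w * t) = -(fE w * (gE w * t)) := by
  rw [← mul_assoc, hgf, neg_mul, mul_assoc]

lemma incl_orth0 (m : Fin k → ℝ) (t : Fin (k+1+1)) :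
    incl m t * Pi.single (M := fun _ => ℝ) (0 : Fin (k+1+1)) 1 t = 0 := by
  rcases eq_or_ne t 0 with rfl|ht
  · rw [incl_zero, zero_mul]
  · rw [Pi.single_eq_of_ne ht, mul_zero]

lemma incl_orthL (m : Fin k → ℝ) (t : Fin (k+1+1)) :
    incl m t * Pi.single (M := fun _ => ℝ) (Fin.last (k+1)) 1 t = 0 := by
  rcases eq_or_ne t (Fin.last (k+1)) with rfl|ht
  · rw [incl_last, zero_mul]
  · rw [Pi.single_eq_of_ne ht, mul_zero]

lemma hxf (m : Fin k → ℝ) : ι _ (incl m) * fE w = -(fE w * ι _ (incl m)) :=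
  ι_anticomm (incl_orth0 m)

lemma hxg (m : Fin k → ℝ) : ι _ (incl m) * gE w = -(gE w * ι _ (incl m)) :=
  ι_anticomm (incl_orthL m)

lemma hxf' (m : Fin k → ℝ) (t : CliffordAlgebra (Qw (wex w))) :
    ι _ (incl m) * (fE w * t) = -(fE w * (ι _ (incl m) * t)) := by
  rw [← mul_assoc, hxf, neg_mul, mul_assoc]

lemma hxg' (m : Fin k → ℝ) (t : CliffordAlgebra (Qw (wex w))) :
    ι _ (incl m) * (gE w * t) = -(gE w * (ι _ (incl m) * t)) := by
  rw [← mul_assoc, hxg, neg_mul, mul_assoc]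

/-- the diagonal copy of the small Clifford algebra: generators -/
def DLin : (Fin k → ℝ) →ₗ[ℝ] CliffordAlgebra (Qw (wex w)) where
  toFun m := fE w * (gE w * ι _ (incl m))
  map_add' m m' := by
    show fE w * (gE w * ι _ (incl (m + m'))) = _
    rw [incl_add, map_add, mul_add, mul_add]
  map_smul' c m := by
    show fE w * (gE w * ι _ (incl (c • m))) = _
    rw [incl_smul, map_smul, mul_smul_comm, mul_smul_comm, RingHom.id_apply]

lemma DLin_sq (m : Fin k → ℝ) :
    DLin w m * DLin w m = algebraMap ℝ _ (Qw w m) := by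
  rw [DLin]
  dsimp only [LinearMap.coe_mk, AddHom.coe_mk]
  rw [mul_assoc]
  rw [show gE w * ι _ (incl m) * (fE w * (gE w * ι _ (incl m)))
      = gE w * (ι _ (incl m) * (fE w * (gE w * ι _ (incl m)))) from by rw [mul_assoc]]
  rw [hxf', hxg', CliffordAlgebra.ι_sq_scalar, Qw_incl]
  simp only [mul_neg, neg_neg, gf', gg', ff']

/-- The diagonal embedding of the small Clifford algebra into the big one. -/
def DHom : CliffordAlgebra (Qw w) →ₐ[ℝ] CliffordAlgebra (Qw (wex w)) :=
  CliffordAlgebra.lift _ ⟨DLin w, DLin_sq w⟩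

lemma DHom_ι (m : Fin k → ℝ) : DHom w (ι _ m) = fE w * (gE w * ι _ (incl m)) := by
  rw [DHom, CliffordAlgebra.lift_ι_apply]; rfl

lemma commute_DHom_fE (x : CliffordAlgebra (Qw w)) : Commute (DHom w x) (fE w) := by
  induction x using CliffordAlgebra.induction with
  | algebraMap r =>
    rw [AlgHom.commutes]
    exact Algebra.commute_algebraMap_left r (fE w)
  | ι m =>
    rw [DHom_ι]
    show _ = _
    simp only [mul_assoc, hxf, gf', ff', mul_neg, neg_neg]
  | mul a b ha hb => rw [map_mul]; exact ha.mul_left hb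
  | add a b ha hb => rw [map_add]; exact ha.add_left hb

lemma commute_DHom_gE (x : CliffordAlgebra (Qw w)) : Commute (DHom w x) (gE w) := by
  induction x using CliffordAlgebra.induction with
  | algebraMap r =>
    rw [AlgHom.commutes]
    exact Algebra.commute_algebraMap_left r (gE w)
  | ι m =>
    rw [DHom_ι]
    show _ = _
    simp only [mul_assoc, hxg, gf', gg', mul_neg, neg_neg]
  | mul a b ha hb => rw [map_mul]; exact ha.mul_left hb
  | add a b ha hb => rw [map_add]; exact ha.add_left hb

/-- matrix units inside the big Clifford algebra -/
def U00 : CliffordAlgebra (Qw (wex w)) := (2⁻¹ : ℝ) • (1 + fE w * gE w)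
def U01 : CliffordAlgebra (Qw (wex w)) := (2⁻¹ : ℝ) • (gE w + fE w)
def U10 : CliffordAlgebra (Qw (wex w)) := (2⁻¹ : ℝ) • (gE w - fE w)
def U11 : CliffordAlgebra (Qw (wex w)) := (2⁻¹ : ℝ) • (1 - fE w * gE w)

/-- the embedding of the 2x2 real matrix algebra, as a linear map -/
def gLin : Matrix (Fin 2) (Fin 2) ℝ →ₗ[ℝ] CliffordAlgebra (Qw (wex w)) where
  toFun A := A 0 0 • U00 w + A 0 1 • U01 w + A 1 0 • U10 w + A 1 1 • U11 w
  map_add' A B := by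
    simp only [Matrix.add_apply, add_smul]
    module
  map_smul' c A := by
    simp only [Matrix.smul_apply, smul_eq_mul, mul_smul, RingHom.id_apply]
    module

lemma gLin_one : gLin w 1 = 1 := by
  rw [gLin]
  dsimp only [LinearMap.coe_mk, AddHom.coe_mk]
  rw [Matrix.one_apply_eq, Matrix.one_apply_eq,
    Matrix.one_apply_ne (by decide : (0 : Fin 2) ≠ 1),
    Matrix.one_apply_ne (by decide : (1 : Fin 2) ≠ 0)]
  rw [U00, U11]
  module

lemma gLin_mul (A B : Matrix (Fin 2) (Fin 2) ℝ) :
    gLin w (A * B) = gLin w A * gLin w B := by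
  rw [Matrix.eta_fin_two A, Matrix.eta_fin_two B, Matrix.mul_fin_two]
  rw [gLin]
  dsimp only [LinearMap.coe_mk, AddHom.coe_mk]
  simp only [Matrix.of_apply, Matrix.cons_val', Matrix.cons_val_zero, Matrix.cons_val_one,
    Matrix.head_cons, Matrix.head_fin_const, Matrix.empty_val', Matrix.cons_val_fin_one]
  simp only [U00, U01, U10, U11]
  simp only [smul_add, smul_sub, add_mul, mul_add, sub_mul, mul_sub,
    smul_mul_assoc, mul_smul_comm, smul_smul, one_mul, mul_one, mul_assoc,
    hff, hgg, hgf, ff', gg', gf', mul_neg, neg_mul, neg_neg]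
  module

/-- the embedding of the 2x2 real matrix algebra -/
def GHom : Matrix (Fin 2) (Fin 2) ℝ →ₐ[ℝ] CliffordAlgebra (Qw (wex w)) :=
  AlgHom.ofLinearMap (gLin w) (gLin_one w) (gLin_mul w)

lemma commute_DHom_GHom (x : CliffordAlgebra (Qw w)) (A : Matrix (Fin 2) (Fin 2) ℝ) :
    Commute (DHom w x) (GHom w A) := by
  have hf := commute_DHom_fE w x
  have hg := commute_DHom_gE w x
  have h00 : Commute (DHom w x) (U00 w) :=
    (Commute.one_right _ |>.add_right (hf.mul_right hg)).smul_right _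
  have h01 : Commute (DHom w x) (U01 w) := (hg.add_right hf).smul_right _
  have h10 : Commute (DHom w x) (U10 w) := (hg.sub_right hf).smul_right _
  have h11 : Commute (DHom w x) (U11 w) :=
    (Commute.one_right _ |>.sub_right (hf.mul_right hg)).smul_right _
  show Commute _ (gLin w A)
  rw [gLin]
  dsimp only [LinearMap.coe_mk, AddHom.coe_mk]
  exact (((h00.smul_right _).add_right ((h01.smul_right _))).add_right
    (h10.smul_right _)).add_right (h11.smul_right _)

/-- the inverse algebra hom -/
def PsiHom : Matrix (Fin 2) (Fin 2) (CliffordAlgebra (Qw w)) →ₐ[ℝ] CliffordAlgebra (Qw (wex w)) :=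
  (Algebra.TensorProduct.lift (DHom w) (GHom w) (commute_DHom_GHom w)).comp
    (matrixEquivTensor (Fin 2) ℝ (CliffordAlgebra (Qw w))).toAlgHom

lemma GHom_apply (A : Matrix (Fin 2) (Fin 2) ℝ) :
    GHom w A = A 0 0 • U00 w + A 0 1 • U01 w + A 1 0 • U10 w + A 1 1 • U11 w := rfl

lemma GHom_std00 : GHom w (Matrix.single 0 0 1) = U00 w := by
  rw [GHom_apply]; simp [Matrix.single]

lemma GHom_std01 : GHom w (Matrix.single 0 1 1) = U01 w := by
  rw [GHom_apply]; simp [Matrix.single]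

lemma GHom_std10 : GHom w (Matrix.single 1 0 1) = U10 w := by
  rw [GHom_apply]; simp [Matrix.single]

lemma GHom_std11 : GHom w (Matrix.single 1 1 1) = U11 w := by
  rw [GHom_apply]; simp [Matrix.single]

lemma PsiHom_apply (A : Matrix (Fin 2) (Fin 2) (CliffordAlgebra (Qw w))) :
    PsiHom w A = ∑ p : Fin 2 × Fin 2,
      DHom w (A p.1 p.2) * GHom w (Matrix.single p.1 p.2 1) := by
  rw [PsiHom, AlgHom.comp_apply, AlgEquiv.toAlgHom_eq_coe, AlgEquiv.coe_algHom,
    matrixEquivTensor_apply, map_sum]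
  refine Finset.sum_congr rfl fun p _ => ?_
  rw [Algebra.TensorProduct.lift_tmul]

lemma PsiHom_fin (a b c d : CliffordAlgebra (Qw w)) :
    PsiHom w !![a, b; c, d] = DHom w a * U00 w + DHom w b * U01 w
      + DHom w c * U10 w + DHom w d * U11 w := by
  rw [PsiHom_apply, Fintype.sum_prod_type]
  rw [Fin.sum_univ_two]
  rw [Fin.sum_univ_two, Fin.sum_univ_two]
  simp only [Matrix.of_apply, Matrix.cons_val', Matrix.cons_val_zero, Matrix.cons_val_one,
    Matrix.head_cons, Matrix.head_fin_const, Matrix.empty_val', Matrix.cons_val_fin_one,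
    GHom_std00, GHom_std01, GHom_std10, GHom_std11]
  abel

lemma mid_ne_zero (j : Fin k) : j.succ.castSucc ≠ (0 : Fin (k+1+1)) := by
  simp [Fin.ext_iff]

lemma mid_ne_last (j : Fin k) : j.succ.castSucc ≠ Fin.last (k+1) := by
  simp [Fin.ext_iff]
  omega

lemma psi_phi : (PsiHom w).comp (PhiHom w) = AlgHom.id ℝ _ := by
  apply CliffordAlgebra.hom_ext
  apply (Pi.basisFun ℝ (Fin (k+1+1))).ext
  intro i
  simp only [Pi.basisFun_apply, LinearMap.comp_apply, AlgHom.toLinearMap_apply,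
    AlgHom.comp_apply, AlgHom.coe_id, id_eq]
  rw [PhiHom_ι]
  refine Fin.lastCases ?_ (fun u => ?_) i
  · -- i = last
    have h1 : (fun j : Fin k =>
        Pi.single (M := fun _ => ℝ) (Fin.last (k+1)) 1 (j.succ.castSucc)) = 0 := by
      funext j; exact Pi.single_eq_of_ne (mid_ne_last j) 1
    rw [phiLin]
    dsimp only [LinearMap.coe_mk, AddHom.coe_mk]
    rw [h1, map_zero, Pi.single_eq_same, Pi.single_eq_of_ne (Ne.symm (last_ne_zero))]
    rw [add_zero, sub_zero, map_one, neg_zero]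
    rw [PsiHom_fin]
    simp only [map_zero, map_one, zero_mul, one_mul, zero_add, add_zero]
    show U01 w + U10 w = gE w
    rw [U01, U10]
    module
  · refine Fin.cases ?_ (fun j => ?_) u
    · -- i = 0
      rw [Fin.castSucc_zero]
      have h1 : (fun j : Fin k =>
          Pi.single (M := fun _ => ℝ) (0 : Fin (k+1+1)) 1 (j.succ.castSucc)) = 0 := by
        funext j; exact Pi.single_eq_of_ne (mid_ne_zero j) 1
      rw [phiLin]
      dsimp only [LinearMap.coe_mk, AddHom.coe_mk]
      rw [h1, map_zero, Pi.single_eq_same, Pi.single_eq_of_ne (last_ne_zero)]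
      rw [zero_add, zero_sub, map_one, neg_zero, map_neg, map_one]
      rw [PsiHom_fin]
      simp only [map_zero, map_one, map_neg, zero_mul, one_mul, neg_mul, zero_add, add_zero]
      show U01 w + -(U10 w) = fE w
      rw [U01, U10]
      module
    · -- i = j.succ.castSucc
      have h1 : (fun l : Fin k =>
          Pi.single (M := fun _ => ℝ) (j.succ.castSucc : Fin (k+1+1)) 1 (l.succ.castSucc))
          = Pi.single j 1 := by
        funext l
        rw [Pi.single_apply, Pi.single_apply]
        congr 1
        simp [Fin.castSucc_inj, Fin.succ_inj]
      rw [phiLin]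
      dsimp only [LinearMap.coe_mk, AddHom.coe_mk]
      rw [h1, Pi.single_eq_of_ne (Ne.symm (mid_ne_last j)), Pi.single_eq_of_ne (Ne.symm (mid_ne_zero j))]
      rw [add_zero, sub_zero, map_zero, PsiHom_fin]
      simp only [map_zero, zero_mul, add_zero, zero_add]
      rw [map_neg, neg_mul, ← sub_eq_add_neg, ← mul_sub]
      have hU : U00 w - U11 w = fE w * gE w := by
        rw [U00, U11]; module
      rw [hU, DHom_ι, ← incl_single j]
      simp only [mul_assoc, hxf', hxg, gf', gg', ff', mul_neg, neg_neg]

lemma single_zero_mid : (fun j : Fin k =>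
    Pi.single (M := fun _ => ℝ) (0 : Fin (k+1+1)) 1 (j.succ.castSucc)) = 0 := by
  funext j; exact Pi.single_eq_of_ne (mid_ne_zero j) 1

lemma single_last_mid : (fun j : Fin k =>
    Pi.single (M := fun _ => ℝ) (Fin.last (k+1)) 1 (j.succ.castSucc)) = 0 := by
  funext j; exact Pi.single_eq_of_ne (mid_ne_last j) 1

lemma incl_mid_fun (m : Fin k → ℝ) : (fun j : Fin k => incl m (j.succ.castSucc)) = m :=
  funext (incl_mid m)

lemma Phi_fE : PhiHom w (fE w) = !![0, 1; -1, 0] := by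
  rw [fE, PhiHom_ι, phiLin]
  dsimp only [LinearMap.coe_mk, AddHom.coe_mk]
  rw [single_zero_mid, map_zero, Pi.single_eq_same, Pi.single_eq_of_ne (last_ne_zero),
    zero_add, zero_sub, map_one, map_neg, map_one, neg_zero]

lemma Phi_gE : PhiHom w (gE w) = !![0, 1; 1, 0] := by
  rw [gE, PhiHom_ι, phiLin]
  dsimp only [LinearMap.coe_mk, AddHom.coe_mk]
  rw [single_last_mid, map_zero, Pi.single_eq_same, Pi.single_eq_of_ne (Ne.symm (last_ne_zero)),
    add_zero, sub_zero, map_one, neg_zero]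

lemma Phi_x (m : Fin k → ℝ) :
    PhiHom w (ι _ (incl m)) = !![ι (Qw w) m, 0; 0, -(ι (Qw w) m)] := by
  rw [PhiHom_ι, phiLin]
  dsimp only [LinearMap.coe_mk, AddHom.coe_mk]
  rw [incl_mid_fun, incl_zero, incl_last, add_zero, sub_zero, map_zero]

/-- diagonal embedding into 2x2 matrices -/
def diagHom : CliffordAlgebra (Qw w) →ₐ[ℝ] Matrix (Fin 2) (Fin 2) (CliffordAlgebra (Qw w)) :=
  AlgHom.ofLinearMap
    { toFun := fun x => Matrix.diagonal (fun _ => x)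
      map_add' := fun a b => by ext i j; by_cases h : i = j <;>
        simp [Matrix.diagonal_apply, h]
      map_smul' := fun c a => by ext i j; by_cases h : i = j <;>
        simp [Matrix.diagonal_apply, h] }
    (by ext i j; by_cases h : i = j <;> simp [Matrix.diagonal_apply, Matrix.one_apply, h])
    (fun x y => by
      show Matrix.diagonal _ = Matrix.diagonal _ * Matrix.diagonal _
      rw [Matrix.diagonal_mul_diagonal])

lemma diagHom_apply (x : CliffordAlgebra (Qw w)) :
    diagHom w x = Matrix.diagonal (fun _ => x) := rfl

lemma phi_DHom : (PhiHom w).comp (DHom w) = diagHom w := by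
  apply CliffordAlgebra.hom_ext
  apply (Pi.basisFun ℝ (Fin k)).ext
  intro j
  simp only [Pi.basisFun_apply, LinearMap.comp_apply, AlgHom.toLinearMap_apply,
    AlgHom.comp_apply]
  rw [DHom_ι, map_mul, map_mul, Phi_fE, Phi_gE, Phi_x, diagHom_apply]
  rw [Matrix.mul_fin_two, Matrix.mul_fin_two]
  ext i j'
  fin_cases i <;> fin_cases j' <;> simp [Matrix.diagonal_apply]

lemma Phi_U00 : PhiHom w (U00 w) = Matrix.single 0 0 (1 : CliffordAlgebra (Qw w)) := by
  rw [U00, map_smul, map_add, map_one, map_mul, Phi_fE, Phi_gE, Matrix.mul_fin_two]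
  ext i j
  fin_cases i <;> fin_cases j <;>
    simp [Matrix.single, Matrix.one_apply] <;> module

lemma Phi_U01 : PhiHom w (U01 w) = Matrix.single 0 1 (1 : CliffordAlgebra (Qw w)) := by
  rw [U01, map_smul, map_add, Phi_fE, Phi_gE]
  ext i j
  fin_cases i <;> fin_cases j <;>
    simp [Matrix.single] <;> module

lemma Phi_U10 : PhiHom w (U10 w) = Matrix.single 1 0 (1 : CliffordAlgebra (Qw w)) := by
  rw [U10, map_smul, map_sub, Phi_fE, Phi_gE]
  ext i j
  fin_cases i <;> fin_cases j <;>
    simp [Matrix.single] <;> module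

lemma Phi_U11 : PhiHom w (U11 w) = Matrix.single 1 1 (1 : CliffordAlgebra (Qw w)) := by
  rw [U11, map_smul, map_sub, map_one, map_mul, Phi_fE, Phi_gE, Matrix.mul_fin_two]
  ext i j
  fin_cases i <;> fin_cases j <;>
    simp [Matrix.single, Matrix.one_apply] <;> module

lemma Phi_GHom_std (i j : Fin 2) :
    PhiHom w (GHom w (Matrix.single i j 1))
      = Matrix.single i j (1 : CliffordAlgebra (Qw w)) := by
  fin_cases i <;> fin_cases j <;> simp only [Fin.zero_eta, Fin.mk_one]
  · rw [GHom_std00, Phi_U00]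
  · rw [GHom_std01, Phi_U01]
  · rw [GHom_std10, Phi_U10]
  · rw [GHom_std11, Phi_U11]

lemma diag_mul_std (x : CliffordAlgebra (Qw w)) (i j : Fin 2) :
    Matrix.diagonal (fun _ => x) * Matrix.single i j (1 : CliffordAlgebra (Qw w))
      = Matrix.single i j x := by
  ext a b
  rw [Matrix.diagonal_mul]
  simp [Matrix.single]

lemma phi_psi (A : Matrix (Fin 2) (Fin 2) (CliffordAlgebra (Qw w))) :
    PhiHom w (PsiHom w A) = A := by
  rw [PsiHom_apply, map_sum]
  have key : ∀ p : Fin 2 × Fin 2,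
      PhiHom w (DHom w (A p.1 p.2) * GHom w (Matrix.single p.1 p.2 1))
        = Matrix.single p.1 p.2 (A p.1 p.2) := by
    rintro ⟨i, j⟩
    rw [map_mul]
    have hd : PhiHom w (DHom w (A i j)) = diagHom w (A i j) :=
      AlgHom.congr_fun (phi_DHom w) (A i j)
    rw [hd, diagHom_apply, Phi_GHom_std, diag_mul_std]
  rw [Finset.sum_congr rfl (fun p _ => key p)]
  rw [Fintype.sum_prod_type]
  exact (Matrix.matrix_eq_sum_single A).symm

/-- The central equivalence: `C(wex w) ≅ M_2(C(w))`. -/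
def centralEquiv : CliffordAlgebra (Qw (wex w)) ≃ₐ[ℝ]
    Matrix (Fin 2) (Fin 2) (CliffordAlgebra (Qw w)) :=
  AlgEquiv.ofAlgHom (PhiHom w) (PsiHom w)
    (AlgHom.ext (phi_psi w)) (psi_phi w)

/-- transport along an index cast -/
def castQEquiv {n m : ℕ} (h : n = m) (w : Fin m → ℝ) :
    CliffordAlgebra (Qw (w ∘ Fin.cast h)) ≃ₐ[ℝ] CliffordAlgebra (Qw w) :=
  CliffordAlgebra.equivOfIsometry
    { toLinearEquiv := LinearEquiv.funCongrLeft ℝ ℝ (finCongr h).symm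
      map_app' := by
        intro v
        show Qw w (v ∘ (finCongr h).symm) = Qw (w ∘ Fin.cast h) v
        rw [QuadraticMap.weightedSumSquares_apply, QuadraticMap.weightedSumSquares_apply]
        refine (Fintype.sum_equiv (finCongr h)
          (fun j => (w ∘ Fin.cast h) j • (v j * v j)) _ fun j => ?_).symm
        simp [LinearMap.funLeft, Function.comp] }


/-- the weights of `Qpq` -/
def QpqW (p q : ℕ) : Fin (p + q) → ℝ := fun i => if (i : ℕ) < p then (-1 : ℝ) else 1

lemma wex_QpqW (a b : ℕ) (t : Fin ((a+b)+1+1)) :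
    wex (QpqW a b) t = if (t : ℕ) < a + 1 then (-1 : ℝ) else 1 := by
  refine Fin.lastCases ?_ (fun u => ?_) t
  · rw [wex_last, Fin.val_last, if_neg (by omega)]
  · refine Fin.cases ?_ (fun v => ?_) u
    · rw [Fin.castSucc_zero, wex_zero]
      rw [if_pos (by simp)]
    · rw [wex_mid, QpqW]
      simp only [Fin.coe_castSucc, Fin.val_succ]
      by_cases hv : (v : ℕ) < a
      · rw [if_pos hv, if_pos (by omega)]
      · rw [if_neg hv, if_neg (by omega)]

/-- the key step: `C^{a+1,b+1} ≅ M_2(C^{a,b})` -/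
def stepEquiv (a b : ℕ) : CliffordAlgebra (Qpq (a+1) (b+1)) ≃ₐ[ℝ]
    Matrix (Fin 2) (Fin 2) (CliffordAlgebra (Qpq a b)) := by
  have h : (a+1)+(b+1) = (a+b)+1+1 := by omega
  have hQ : Qpq (a+1) (b+1) = Qw (wex (QpqW a b) ∘ Fin.cast h) := by
    refine congrArg (QuadraticMap.weightedSumSquares ℝ) (funext fun i => ?_)
    rw [Function.comp_apply, wex_QpqW, Fin.coe_cast]
  rw [hQ]
  exact (castQEquiv h (wex (QpqW a b))).trans (centralEquiv (QpqW a b))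

/-- 1x1 matrices -/
def matrixFin1 (A : Type) [Ring A] [Algebra ℝ A] : Matrix (Fin 1) (Fin 1) A ≃ₐ[ℝ] A where
  toFun M := M 0 0
  invFun a := Matrix.of fun _ _ => a
  left_inv M := by
    ext i j
    fin_cases i <;> fin_cases j <;> rfl
  right_inv a := rfl
  map_mul' M N := by
    show (M * N) 0 0 = M 0 0 * N 0 0
    rw [Matrix.mul_apply, Fin.sum_univ_one]
  map_add' M N := rfl
  commutes' r := by
    simp [Matrix.algebraMap_eq_diagonal]

end CliffAux

open CliffAux

/-- `C^{p+n,q+n} ≅ M_{2^n}(C^{p,q})`. -/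
theorem clifford_pnqn_equiv_matrix (p q n : ℕ) :
    Nonempty (CliffordAlgebra (Qpq (p + n) (q + n)) ≃ₐ[ℝ]
      Matrix (Fin (2 ^ n)) (Fin (2 ^ n)) (CliffordAlgebra (Qpq p q))) := by
  induction n with
  | zero => exact ⟨(matrixFin1 (CliffordAlgebra (Qpq p q))).symm⟩
  | succ n ih =>
    obtain ⟨e⟩ := ih
    refine ⟨(stepEquiv (p+n) (q+n)).trans (e.mapMatrix.trans
      ((Matrix.compAlgEquiv _ _ _ _).trans
        (Matrix.reindexAlgEquiv ℝ _ (finProdFinEquiv.trans (finCongr (pow_succ' 2 n).symm)))))⟩
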